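/- Under the fixed-order modified Metropolis chain, if p(f_{≤i-1}(x)) ≥ p(f_{≤i}(x)) for some i ∈ {1,…,n}, then the state f_i(x) is reachable from x (in at most two full sweeps T = T_n ∘ … ∘ T_1). -/

import Mathlib

open Matrix

/-- Flip the `i`-th coordinate of `x`. -/
def flipAt {n : ℕ} (i : Fin n) (x : Fin n → Bool) : Fin n → Bool :=
  Function.update x i (!x i)

/-- Flip the first `k` coordinates of `x` (1-indexed coordinates `1..k`). -/
def fle {n : ℕ} (k : ℕ) (x : Fin n → Bool) : Fin n → Bool :=
  fun j => if j.val < k then !x j else x j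

/-- Flip coordinates `k..n` (1-indexed) of `x`; `fge (n+1) x = x`. -/
def fge {n : ℕ} (k : ℕ) (x : Fin n → Bool) : Fin n → Bool :=
  fun j => if k ≤ j.val + 1 then !x j else x j

/-- Modified Metropolis flip probability at site `i`. -/
noncomputable def flipMod {n : ℕ} (p : (Fin n → Bool) → ℝ) (i : Fin n)
    (x : Fin n → Bool) : ℝ :=
  if p x < p (flipAt i x) then 1
  else if p (flipAt i x) < p x then p (flipAt i x) / p x
  else 1 / 2

/-- Standard Metropolis flip probability at site `i`. -/
noncomputable def flipStd {n : ℕ} (p : (Fin n → Bool) → ℝ) (i : Fin n)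
    (x : Fin n → Bool) : ℝ :=
  min 1 (p (flipAt i x) / p x)

/-- Single-site transition matrix of the modified Metropolis operator. -/
noncomputable def Tmod {n : ℕ} (p : (Fin n → Bool) → ℝ) (i : Fin n) :
    Matrix (Fin n → Bool) (Fin n → Bool) ℝ :=
  fun x y =>
    if y = flipAt i x then flipMod p i x
    else if y = x then 1 - flipMod p i x
    else 0

/-- Single-site transition matrix of the standard Metropolis operator. -/
noncomputable def Tstd {n : ℕ} (p : (Fin n → Bool) → ℝ) (i : Fin n) :
    Matrix (Fin n → Bool) (Fin n → Bool) ℝ :=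
  fun x y =>
    if y = flipAt i x then flipStd p i x
    else if y = x then 1 - flipStd p i x
    else 0

/-- Full sweep `T = T_n ∘ ⋯ ∘ T_1` (apply `T_1` first) of the modified operators. -/
noncomputable def sweep {n : ℕ} (p : (Fin n → Bool) → ℝ) :
    Matrix (Fin n → Bool) (Fin n → Bool) ℝ :=
  (List.ofFn (fun i : Fin n => Tmod p i)).prod

/-- Full sweep of the standard Metropolis operators. -/
noncomputable def sweepStd {n : ℕ} (p : (Fin n → Bool) → ℝ) :
    Matrix (Fin n → Bool) (Fin n → Bool) ℝ :=
  (List.ofFn (fun i : Fin n => Tstd p i)).prod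

section Aux

variable {n : ℕ}

lemma flipMod_pos (p : (Fin n → Bool) → ℝ) (hp : ∀ x, 0 < p x) (i : Fin n)
    (x : Fin n → Bool) : 0 < flipMod p i x := by
  unfold flipMod
  split_ifs with h1 h2
  · norm_num
  · exact div_pos (hp _) (hp _)
  · norm_num

lemma flipMod_le_one (p : (Fin n → Bool) → ℝ) (hp : ∀ x, 0 < p x) (i : Fin n)
    (x : Fin n → Bool) : flipMod p i x ≤ 1 := by
  unfold flipMod
  split_ifs with h1 h2
  · exact le_rfl
  · exact le_of_lt ((div_lt_one (hp x)).2 h2)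
  · norm_num

lemma flipMod_lt_one (p : (Fin n → Bool) → ℝ) (hp : ∀ x, 0 < p x) (i : Fin n)
    (x : Fin n → Bool) (hle : p (flipAt i x) ≤ p x) : flipMod p i x < 1 := by
  unfold flipMod
  rw [if_neg (not_lt.2 hle)]
  split_ifs with h2
  · exact (div_lt_one (hp x)).2 h2
  · norm_num

lemma Tmod_nonneg (p : (Fin n → Bool) → ℝ) (hp : ∀ x, 0 < p x) (i : Fin n)
    (x y : Fin n → Bool) : 0 ≤ Tmod p i x y := by
  unfold Tmod
  split_ifs
  · exact le_of_lt (flipMod_pos p hp i x)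
  · linarith [flipMod_le_one p hp i x]
  · exact le_rfl

lemma flipAt_ne (i : Fin n) (x : Fin n → Bool) : flipAt i x ≠ x := by
  intro hEq
  have := congrFun hEq i
  simp [flipAt] at this

lemma Tmod_flip (p : (Fin n → Bool) → ℝ) (i : Fin n) (x : Fin n → Bool) :
    Tmod p i x (flipAt i x) = flipMod p i x := by
  simp [Tmod]

lemma Tmod_stay (p : (Fin n → Bool) → ℝ) (i : Fin n) (x : Fin n → Bool) :
    Tmod p i x x = 1 - flipMod p i x := by
  simp [Tmod, (flipAt_ne i x).symm]

end Aux

section MatAux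

variable {S : Type*} [Fintype S] [DecidableEq S]

lemma mul_entry_pos (A B : Matrix S S ℝ)
    (hA : ∀ a b, 0 ≤ A a b) (hB : ∀ a b, 0 ≤ B a b)
    (a b c : S) (h1 : 0 < A a b) (h2 : 0 < B b c) : 0 < (A * B) a c := by
  rw [Matrix.mul_apply]
  have key : A a b * B b c ≤ ∑ k, A a k * B k c :=
    Finset.single_le_sum (fun k _ => mul_nonneg (hA a k) (hB k c)) (Finset.mem_univ b)
  exact lt_of_lt_of_le (mul_pos h1 h2) key

lemma list_prod_nonneg : ∀ (L : List (Matrix S S ℝ)),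
    (∀ M ∈ L, ∀ a b, 0 ≤ M a b) → ∀ a b, 0 ≤ L.prod a b
  | [], _, a, b => by
      simp [Matrix.one_apply]
      split_ifs <;> norm_num
  | (M :: L), hL, a, b => by
      rw [List.prod_cons, Matrix.mul_apply]
      refine Finset.sum_nonneg fun k _ => mul_nonneg ?_ ?_
      · exact hL M List.mem_cons_self a k
      · exact list_prod_nonneg L (fun N hN => hL N (List.mem_cons_of_mem M hN)) k b

lemma ofFn_prod_pos : ∀ (m : ℕ) (g : Fin m → Matrix S S ℝ),
    (∀ i a b, 0 ≤ g i a b) →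
    ∀ (s : ℕ → S), (∀ i : Fin m, 0 < g i (s i.val) (s (i.val + 1))) →
    0 < (List.ofFn g).prod (s 0) (s m)
  | 0, g, hg, s, hs => by simp [Matrix.one_apply]
  | (m + 1), g, hg, s, hs => by
      rw [List.ofFn_succ, List.prod_cons]
      refine mul_entry_pos _ _ (hg 0) ?_ _ (s 1) _ (hs 0) ?_
      · refine list_prod_nonneg _ ?_
        intro M hM
        rw [List.mem_ofFn] at hM
        obtain ⟨j, rfl⟩ := hM
        exact hg _
      · exact ofFn_prod_pos m (fun j => g j.succ) (fun j => hg j.succ)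
          (fun k => s (k + 1)) (fun j => hs j.succ)

end MatAux

section Traj

variable {n : ℕ}

/-- State after the first `k` sub-steps of sweep 1: flip coordinates `< k` except `i`. -/
def traj (x : Fin n → Bool) (i : Fin n) (k : ℕ) : Fin n → Bool :=
  fun j => if j.val < k ∧ j ≠ i then !x j else x j

lemma traj_zero (x : Fin n → Bool) (i : Fin n) : traj x i 0 = x := by
  funext j; simp [traj]

lemma fle_zero (z : Fin n → Bool) : fle 0 z = z := by
  funext j; simp [fle]

lemma flipAt_fle (k : Fin n) (z : Fin n → Bool) :
    flipAt k (fle k.val z) = fle (k.val + 1) z := by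
  funext j
  by_cases hj : j = k
  · subst hj
    simp [flipAt, fle, Function.update_self]
  · have hv : j.val ≠ k.val := fun hc => hj (Fin.ext hc)
    simp only [flipAt, Function.update_of_ne hj, fle]
    have : j.val < k.val + 1 ↔ j.val < k.val := by omega
    exact (if_congr this.symm rfl rfl)

lemma traj_step (x : Fin n → Bool) (i : Fin n) (m : Fin n) (hm : m ≠ i) :
    flipAt m (traj x i m.val) = traj x i (m.val + 1) := by
  funext j
  by_cases hj : j = m
  · subst hj
    simp [flipAt, Function.update_self, traj, hm]
  · have hv : j.val ≠ m.val := fun hc => hj (Fin.ext hc)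
    simp only [flipAt, Function.update_of_ne hj, traj]
    have : (j.val < m.val + 1 ∧ j ≠ i) ↔ (j.val < m.val ∧ j ≠ i) := by
      constructor
      · rintro ⟨h1, h2⟩; exact ⟨by omega, h2⟩
      · rintro ⟨h1, h2⟩; exact ⟨by omega, h2⟩
    exact (if_congr this.symm rfl rfl)

lemma traj_at_i (x : Fin n → Bool) (i : Fin n) : traj x i i.val = fle i.val x := by
  funext j
  simp only [traj, fle]
  by_cases hj : j.val < i.val
  · have : j ≠ i := fun hc => by subst hc; omega
    simp [hj, this]
  · simp [hj]

lemma traj_at_i_succ (x : Fin n → Bool) (i : Fin n) :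
    traj x i (i.val + 1) = fle i.val x := by
  funext j
  simp only [traj, fle]
  by_cases hj : j = i
  · subst hj; simp
  · have hv : j.val ≠ i.val := fun hc => hj (Fin.ext hc)
    have : (j.val < i.val + 1 ∧ j ≠ i) ↔ j.val < i.val := by
      constructor
      · rintro ⟨h1, _⟩; omega
      · intro h1; exact ⟨by omega, hj⟩
    exact (if_congr this rfl rfl)

lemma fle_n_traj (x : Fin n → Bool) (i : Fin n) :
    fle n (traj x i n) = flipAt i x := by
  funext j
  have hj : j.val < n := j.isLt
  by_cases hji : j = i
  · subst hji
    simp [fle, traj, flipAt, hj]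
  · simp [fle, traj, flipAt, hj, hji, Function.update_of_ne hji]

end Traj

/-- If `p(f_{≤i-1}(x)) ≥ p(f_{≤i}(x))` then `f_i(x)` is reachable from `x`
in at most two full sweeps of the modified Metropolis chain. -/
theorem stmt7 {n : ℕ} (p : (Fin n → Bool) → ℝ) (hp : ∀ x, 0 < p x)
    (x : Fin n → Bool) (i : Fin n)
    (h : p (fle (i.val + 1) x) ≤ p (fle i.val x)) :
    ∃ k : ℕ, 1 ≤ k ∧ k ≤ 2 ∧ 0 < (sweep p ^ k) x (flipAt i x) := by
  refine ⟨2, by norm_num, le_rfl, ?_⟩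
  have hnn : ∀ a b, 0 ≤ sweep p a b := by
    intro a b
    refine list_prod_nonneg _ ?_ a b
    intro M hM
    rw [List.mem_ofFn] at hM
    obtain ⟨j, rfl⟩ := hM
    exact Tmod_nonneg p hp j
  have hs1 : 0 < sweep p x (traj x i n) := by
    have key := ofFn_prod_pos n (fun j => Tmod p j) (fun j => Tmod_nonneg p hp j)
      (fun k => traj x i k) ?_
    · rw [traj_zero] at key; exact key
    · intro m
      by_cases hm : m = i
      · subst hm
        rw [traj_at_i, traj_at_i_succ, Tmod_stay]
        have hub : p (flipAt m (fle m.val x)) ≤ p (fle m.val x) := by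
          rw [flipAt_fle]; exact h
        linarith [flipMod_lt_one p hp m (fle m.val x) hub]
      · rw [← traj_step x i m hm, Tmod_flip]
        exact flipMod_pos p hp m _
  have hs2 : 0 < sweep p (traj x i n) (flipAt i x) := by
    have key := ofFn_prod_pos n (fun j => Tmod p j) (fun j => Tmod_nonneg p hp j)
      (fun k => fle k (traj x i n)) ?_
    · rw [fle_zero, fle_n_traj] at key; exact key
    · intro m
      rw [show fle (m.val + 1) (traj x i n) = flipAt m (fle m.val (traj x i n)) from
        (flipAt_fle m _).symm, Tmod_flip]
      exact flipMod_pos p hp m _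
  rw [pow_two]
  exact mul_entry_pos _ _ hnn hnn x (traj x i n) _ hs1 hs2
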